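/- Set S = D(I_I − P^D_ℛ) and V = P^D_{𝒯^{⊥_D}} Z. Then the K×K matrix EᵀSE is invertible and VᵀB = −ZᵀSE(EᵀSE)⁻¹. -/

import Mathlib

open Matrix BigOperators

noncomputable section

/-- Cells `(j,k)` of a `(J+1) × (K+1)` contingency table. -/
abbrev Cell (J K : ℕ) := Fin (J + 1) × Fin (K + 1)

/-- Standard unit vector `e_{jk}` in `ℝ^I`. -/
def eV {J K : ℕ} (c : Cell J K) : Cell J K → ℝ := Pi.single c 1

/-- Row-sum vector `e_{j+} = Σ_k e_{jk}`. -/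
def eRow {J K : ℕ} (j : Fin (J + 1)) : Cell J K → ℝ := ∑ k : Fin (K + 1), eV (j, k)

/-- Column-sum vector `e_{+k} = Σ_j e_{jk}`. -/
def eCol {J K : ℕ} (k : Fin (K + 1)) : Cell J K → ℝ := ∑ j : Fin (J + 1), eV (j, k)

/-- The all-ones vector `e_{++}`. -/
def eAll (J K : ℕ) : Cell J K → ℝ := ∑ j : Fin (J + 1), ∑ k : Fin (K + 1), eV (j, k)

/-- The row space `ℛ = span{e_{0+},…,e_{J+}}`. -/
def rowSpace (J K : ℕ) : Submodule ℝ (Cell J K → ℝ) :=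
  Submodule.span ℝ (Set.range (eRow (J := J) (K := K)))

/-- The column space `𝒞 = span{e_{+0},…,e_{+K}}`. -/
def colSpace (J K : ℕ) : Submodule ℝ (Cell J K → ℝ) :=
  Submodule.span ℝ (Set.range (eCol (J := J) (K := K)))

/-- The diagonal space `𝒟 = span{e_{++}}`. -/
def diagSpace (J K : ℕ) : Submodule ℝ (Cell J K → ℝ) :=
  Submodule.span ℝ {eAll J K}

/-- The marginal space `𝒯 = ℛ + 𝒞`. -/
def margSpace (J K : ℕ) : Submodule ℝ (Cell J K → ℝ) := rowSpace J K ⊔ colSpace J K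

/-- `P` is the `D`-orthogonal projection matrix onto the subspace `S`:
`P x ∈ S` and `x - P x` is `D`-orthogonal to `S`, for every `x`. -/
def IsProjD {J K : ℕ} (D : Matrix (Cell J K) (Cell J K) ℝ) (S : Submodule ℝ (Cell J K → ℝ))
    (P : Matrix (Cell J K) (Cell J K) ℝ) : Prop :=
  ∀ x, P.mulVec x ∈ S ∧ ∀ s ∈ S, (x - P.mulVec x) ⬝ᵥ D.mulVec s = 0

/-- The `D`-orthogonal complement of a subspace `S`. -/
def perpD {J K : ℕ} (D : Matrix (Cell J K) (Cell J K) ℝ) (S : Submodule ℝ (Cell J K → ℝ)) :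
    Submodule ℝ (Cell J K → ℝ) where
  carrier := {x | ∀ t ∈ S, x ⬝ᵥ D.mulVec t = 0}
  add_mem' := by
    intro a b ha hb t ht
    simp only [Set.mem_setOf_eq] at *
    simp [add_dotProduct, ha t ht, hb t ht]
  zero_mem' := by
    intro t ht
    simp
  smul_mem' := by
    intro c a ha t ht
    simp only [Set.mem_setOf_eq] at *
    simp [smul_dotProduct, ha t ht]

/-- The vector `c_{jk} = e_{jk} + e_{00} - e_{j0} - e_{0k}` (for `1 ≤ j`, `1 ≤ k`). -/
def cVec {J K : ℕ} (j : Fin J) (k : Fin K) : Cell J K → ℝ :=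
  eV (j.succ, k.succ) + eV (0, 0) - eV (j.succ, 0) - eV (0, k.succ)

/-- The `I × (JK)` matrix `C` with columns `c_{jk}`. -/
def Cmat (J K : ℕ) : Matrix (Cell J K) (Fin J × Fin K) ℝ :=
  fun i jk => cVec jk.1 jk.2 i

/-- The vector `b_k = e_{0k} - e_{00}` (for `1 ≤ k`). -/
def bVec {J K : ℕ} (k : Fin K) : Cell J K → ℝ :=
  eV ((0 : Fin (J + 1)), k.succ) - eV (0, 0)

/-- The `I × K` matrix `B` with columns `b_k`. -/
def Bmat (J K : ℕ) : Matrix (Cell J K) (Fin K) ℝ :=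
  fun i k => bVec k i

/-- The `I × K` matrix `E` with columns `e_{+1},…,e_{+K}`. -/
def Emat (J K : ℕ) : Matrix (Cell J K) (Fin K) ℝ :=
  fun i k => eCol k.succ i

/-- Column space of a matrix. -/
def colSpan {m n : Type*} [Fintype n] (A : Matrix m n ℝ) : Submodule ℝ (m → ℝ) :=
  Submodule.span ℝ (Set.range fun j => fun i => A i j)

/-- The reduced `(JK) × L` covariate matrix `Z°` with rows `z_{jk}ᵀ`, `j,k ≥ 1`. -/
def Zred {J K : ℕ} {L : Type*} (Z : Matrix (Cell J K) L ℝ) : Matrix (Fin J × Fin K) L ℝ :=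
  fun jk => Z (jk.1.succ, jk.2.succ)

/-- The model space `ℋ = 𝒯 + col(Z)` of the log-linear model
`η_{jk} = α + ρ_j + γ_k + z_{jk}ᵀ θ`. -/
def modelSpace {J K : ℕ} {L : Type*} [Fintype L] (Z : Matrix (Cell J K) L ℝ) :
    Submodule ℝ (Cell J K → ℝ) :=
  margSpace J K ⊔ colSpan Z

end

section AuxLemmas
open Matrix
variable {J K : ℕ}

lemma eV_apply (c i : Cell J K) : eV c i = if i = c then 1 else 0 := by
  simp [eV, Pi.single_apply]

lemma eRow_apply (j : Fin (J+1)) (i : Cell J K) :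
    eRow (K := K) j i = if i.1 = j then 1 else 0 := by
  rcases i with ⟨a, b⟩
  simp only [eRow, Finset.sum_apply, eV_apply, Prod.mk.injEq]
  by_cases h : a = j <;> simp [h]

lemma eCol_apply (k : Fin (K+1)) (i : Cell J K) :
    eCol (J := J) k i = if i.2 = k then 1 else 0 := by
  rcases i with ⟨a, b⟩
  simp only [eCol, Finset.sum_apply, eV_apply, Prod.mk.injEq]
  by_cases h : b = k <;> simp [h]

lemma dot_eRow (v : Cell J K → ℝ) (j : Fin (J+1)) :
    v ⬝ᵥ eRow j = ∑ k, v (j, k) := by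
  simp only [dotProduct, eRow_apply, Fintype.sum_prod_type, mul_ite, mul_one, mul_zero]
  rw [Finset.sum_eq_single j]
  · simp
  · intro x _ hx; simp [hx]
  · intro h; simp at h

lemma dot_eCol (v : Cell J K → ℝ) (k : Fin (K+1)) :
    v ⬝ᵥ eCol k = ∑ j, v (j, k) := by
  simp [dotProduct, eCol_apply, Fintype.sum_prod_type, mul_ite, Finset.sum_ite_eq, Finset.sum_ite_eq', Finset.sum_comm (γ := Fin (J+1))]

lemma eV_dot (c : Cell J K) (v : Cell J K → ℝ) : eV c ⬝ᵥ v = v c := by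
  simp [dotProduct, eV_apply, ite_mul, Finset.sum_ite_eq, Finset.sum_ite_eq']

lemma dotD_left (μ : Cell J K → ℝ) (a b : Cell J K → ℝ) :
    (Matrix.diagonal μ).mulVec a ⬝ᵥ b = a ⬝ᵥ (Matrix.diagonal μ).mulVec b := by
  simp only [dotProduct, Matrix.mulVec_diagonal]
  exact Finset.sum_congr rfl fun i _ => by ring

lemma dot_eV (v : Cell J K → ℝ) (c : Cell J K) : v ⬝ᵥ eV c = v c := by
  simp [dotProduct, eV_apply, mul_ite]

lemma dotD_comm (μ : Cell J K → ℝ) (a b : Cell J K → ℝ) :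
    a ⬝ᵥ (Matrix.diagonal μ).mulVec b = b ⬝ᵥ (Matrix.diagonal μ).mulVec a := by
  simp only [dotProduct, Matrix.mulVec_diagonal]
  exact Finset.sum_congr rfl fun i _ => by ring

lemma dotD_self_zero {μ : Cell J K → ℝ} (hμ : ∀ i, 0 < μ i) {v : Cell J K → ℝ}
    (h : v ⬝ᵥ (Matrix.diagonal μ).mulVec v = 0) : v = 0 := by
  funext i
  have hnn : ∀ i ∈ Finset.univ (α := Cell J K), 0 ≤ v i * (μ i * v i) := by
    intro i _
    have := (hμ i).le
    nlinarith [sq_nonneg (v i)]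
  have h0 : ∑ i : Cell J K, v i * (μ i * v i) = 0 := by
    simpa [dotProduct, Matrix.mulVec_diagonal] using h
  have := (Finset.sum_eq_zero_iff_of_nonneg hnn).1 h0 i (Finset.mem_univ i)
  have hμi := hμ i
  have : v i * v i = 0 := by nlinarith
  simpa [Pi.zero_apply] using mul_self_eq_zero.1 this

lemma eRow_mem (j : Fin (J+1)) : eRow (K := K) j ∈ rowSpace J K :=
  Submodule.subset_span ⟨j, rfl⟩

lemma eCol_mem (k : Fin (K+1)) : eCol (J := J) k ∈ colSpace J K :=
  Submodule.subset_span ⟨k, rfl⟩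

lemma eRow_mem_marg (j : Fin (J+1)) : eRow (K := K) j ∈ margSpace J K :=
  Submodule.mem_sup_left (eRow_mem j)

lemma eCol_mem_marg (k : Fin (K+1)) : eCol (J := J) k ∈ margSpace J K :=
  Submodule.mem_sup_right (eCol_mem k)

lemma rowSpace_const {v : Cell J K → ℝ} (hv : v ∈ rowSpace J K)
    (j : Fin (J+1)) (k : Fin (K+1)) : v (j, k) = v (j, 0) := by
  induction hv using Submodule.span_induction with
  | mem x hx =>
      obtain ⟨j', rfl⟩ := hx
      simp [eRow_apply]
  | zero => simp
  | add x y _ _ hx hy => simp [hx, hy]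
  | smul c x _ hx => simp [hx]

/-- the linear map `t ↦ u ⬝ᵥ D t`. -/
def dotDLin (u : Cell J K → ℝ) (D : Matrix (Cell J K) (Cell J K) ℝ) :
    (Cell J K → ℝ) →ₗ[ℝ] ℝ where
  toFun t := u ⬝ᵥ D.mulVec t
  map_add' x y := by simp [Matrix.mulVec_add, dotProduct_add]
  map_smul' c x := by simp [Matrix.mulVec_smul, dotProduct_smul]

lemma marg_dot_zero {D : Matrix (Cell J K) (Cell J K) ℝ} {u : Cell J K → ℝ}
    (hr : ∀ j, u ⬝ᵥ D.mulVec (eRow j) = 0) (hc : ∀ k, u ⬝ᵥ D.mulVec (eCol k) = 0) :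
    ∀ t ∈ margSpace J K, u ⬝ᵥ D.mulVec t = 0 := by
  have hle : margSpace J K ≤ LinearMap.ker (dotDLin u D) := by
    refine sup_le (Submodule.span_le.2 ?_) (Submodule.span_le.2 ?_)
    · rintro _ ⟨j, rfl⟩
      exact LinearMap.mem_ker.2 (hr j)
    · rintro _ ⟨k, rfl⟩
      exact LinearMap.mem_ker.2 (hc k)
  intro t ht
  exact hle ht

lemma Emat_mulVec_zero (c : Fin K → ℝ) (j : Fin (J+1)) :
    (Emat J K).mulVec c (j, 0) = 0 := by
  simp [Matrix.mulVec, dotProduct, Emat, eCol_apply, (Fin.succ_ne_zero _).symm]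

lemma Emat_mulVec_succ (c : Fin K → ℝ) (j : Fin (J+1)) (k : Fin K) :
    (Emat J K).mulVec c (j, k.succ) = c k := by
  simp [Matrix.mulVec, dotProduct, Emat, eCol_apply, Fin.succ_inj, mul_ite]

end AuxLemmas

/-- with `S = D(I − P^D_ℛ)` and `V = P^D_{𝒯^{⊥_D}} Z`, the matrix `EᵀSE`
is invertible and `VᵀB = −ZᵀSE(EᵀSE)⁻¹`. -/
theorem VtB_representation
    {J K L : ℕ} (hJ : 1 ≤ J) (hK : 1 ≤ K) (hL : 1 ≤ L)
    (μ : Cell J K → ℝ) (hμ : ∀ i, 0 < μ i)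
    (Z : Matrix (Cell J K) (Fin L) ℝ)
    (hZrow : ∀ j, Z (j, 0) = 0) (hZcol : ∀ k, Z (0, k) = 0)
    (PR : Matrix (Cell J K) (Cell J K) ℝ)
    (hPR : IsProjD (Matrix.diagonal μ) (rowSpace J K) PR)
    (PTperp : Matrix (Cell J K) (Cell J K) ℝ)
    (hPTperp : IsProjD (Matrix.diagonal μ) (perpD (Matrix.diagonal μ) (margSpace J K)) PTperp)
    (S : Matrix (Cell J K) (Cell J K) ℝ)
    (hS : S = Matrix.diagonal μ * (1 - PR))
    (V : Matrix (Cell J K) (Fin L) ℝ) (hV : V = PTperp * Z) :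
    IsUnit ((Emat J K)ᵀ * S * Emat J K) ∧
    Vᵀ * Bmat J K = -(Zᵀ * S * Emat J K * ((Emat J K)ᵀ * S * Emat J K)⁻¹) := by
  classical
  have hSmul : ∀ w : Cell J K → ℝ,
      S.mulVec w = (Matrix.diagonal μ).mulVec (w - PR.mulVec w) := by
    intro w
    rw [hS, ← Matrix.mulVec_mulVec, Matrix.sub_mulVec, Matrix.one_mulVec]
  -- Part 1 : invertibility
  have hker : ∀ x : Fin K → ℝ, ((Emat J K)ᵀ * S * Emat J K).mulVec x = 0 → x = 0 := by
    intro x hx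
    set g := (Emat J K).mulVec x with hg
    set f := g - PR.mulVec g with hf
    have h0 : x ⬝ᵥ ((Emat J K)ᵀ * S * Emat J K).mulVec x = 0 := by
      rw [hx, dotProduct_zero]
    have h1 : x ⬝ᵥ ((Emat J K)ᵀ * S * Emat J K).mulVec x
        = f ⬝ᵥ (Matrix.diagonal μ).mulVec f := by
      rw [Matrix.mul_assoc, ← Matrix.mulVec_mulVec, ← Matrix.mulVec_mulVec,
        Matrix.dotProduct_mulVec, Matrix.vecMul_transpose, ← hg, hSmul, ← hf]
      have hperp : PR.mulVec g ⬝ᵥ (Matrix.diagonal μ).mulVec f = 0 := by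
        rw [dotD_comm]
        exact (hPR g).2 (PR.mulVec g) (hPR g).1
      have hsplit : g = f + PR.mulVec g := by rw [hf]; abel
      calc g ⬝ᵥ (Matrix.diagonal μ).mulVec f
          = (f + PR.mulVec g) ⬝ᵥ (Matrix.diagonal μ).mulVec f := by rw [← hsplit]
        _ = f ⬝ᵥ (Matrix.diagonal μ).mulVec f := by
            rw [add_dotProduct, hperp, add_zero]
    have hf0 : f = 0 := dotD_self_zero hμ (h1 ▸ h0)
    have hgrow : g ∈ rowSpace J K := by
      have hgeq : g = PR.mulVec g := by
        have := hf0
        rw [hf, sub_eq_zero] at this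
        exact this
      rw [hgeq]
      exact (hPR g).1
    funext k0
    have h2 := rowSpace_const hgrow 0 k0.succ
    have hx0 : x k0 = g (0, k0.succ) := by rw [hg, Emat_mulVec_succ]
    have hg0 : g (0, (0 : Fin (K+1))) = 0 := by rw [hg, Emat_mulVec_zero]
    show x k0 = 0
    rw [hx0, h2, hg0]
  have hunit : IsUnit ((Emat J K)ᵀ * S * Emat J K) := by
    refine Matrix.mulVec_injective_iff_isUnit.1 ?_
    intro x y hxy
    have h := hker (x - y) (by rw [Matrix.mulVec_sub, hxy, sub_self])
    exact sub_eq_zero.1 h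
  refine ⟨hunit, ?_⟩
  set M := (Emat J K)ᵀ * S * Emat J K with hM
  have hMinv : M * M⁻¹ = 1 :=
    Matrix.mul_nonsing_inv _ ((Matrix.isUnit_iff_isUnit_det _).1 hunit)
  ext l k
  set c : Fin K → ℝ := fun k' => M⁻¹ k' k with hc
  set w := (Emat J K).mulVec c with hw
  set d : Cell J K → ℝ := bVec k - S.mulVec w with hd
  have hdr : ∀ j, d ⬝ᵥ eRow j = 0 := by
    intro j
    rw [hd, sub_dotProduct]
    have h1 : bVec k ⬝ᵥ (eRow j : Cell J K → ℝ) = 0 := by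
      simp [bVec, sub_dotProduct, eV_dot, eRow_apply]
    have h2 : S.mulVec w ⬝ᵥ eRow j = 0 := by
      rw [hSmul, dotD_left]
      exact (hPR w).2 (eRow j) (eRow_mem j)
    rw [h1, h2, sub_self]
  have hMc : ∀ k'' : Fin K, M.mulVec c k'' = (1 : Matrix (Fin K) (Fin K) ℝ) k'' k := by
    intro k''
    have e : M.mulVec c k'' = (M * M⁻¹) k'' k := by
      rw [Matrix.mul_apply]; rfl
    rw [e, hMinv]
  have hdcs : ∀ k'' : Fin K, d ⬝ᵥ eCol k''.succ = 0 := by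
    intro k''
    rw [hd, sub_dotProduct]
    have h1 : bVec k ⬝ᵥ (eCol k''.succ : Cell J K → ℝ) = if k'' = k then 1 else 0 := by
      by_cases hkk : k'' = k
      · subst hkk
        simp [bVec, sub_dotProduct, eV_dot, eCol_apply, Fin.succ_ne_zero,
          Ne.symm (Fin.succ_ne_zero k'')]
      · simp [bVec, sub_dotProduct, eV_dot, eCol_apply, Fin.succ_ne_zero,
          Fin.succ_inj, hkk, Ne.symm hkk, Ne.symm (Fin.succ_ne_zero k'')]
    have e1 : S.mulVec w ⬝ᵥ eCol k''.succ = ((Emat J K)ᵀ.mulVec (S.mulVec w)) k'' := by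
      rw [Matrix.mulVec_transpose]
      simp only [Matrix.vecMul, dotProduct, Emat]
    have e2 : (Emat J K)ᵀ.mulVec (S.mulVec w) = M.mulVec c := by
      rw [hw, Matrix.mulVec_mulVec, Matrix.mulVec_mulVec, hM]
    have h2 : S.mulVec w ⬝ᵥ eCol k''.succ = if k'' = k then 1 else 0 := by
      rw [e1, e2, hMc k'', Matrix.one_apply]
    rw [h1, h2, sub_self]
  have hdc : ∀ k', d ⬝ᵥ eCol k' = 0 := by
    have hsum_all : ∑ k', d ⬝ᵥ eCol k' = ∑ j, d ⬝ᵥ eRow j := by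
      simp only [dot_eCol, dot_eRow]
      exact Finset.sum_comm
    intro k'
    refine Fin.cases ?_ (fun k'' => hdcs k'') k'
    have h := hsum_all
    rw [Fin.sum_univ_succ] at h
    simp only [hdcs, hdr, Finset.sum_const_zero, add_zero] at h
    exact h
  set u : Cell J K → ℝ := fun i => d i / μ i with hu
  have hDu : (Matrix.diagonal μ).mulVec u = d := by
    funext i
    rw [Matrix.mulVec_diagonal]
    show μ i * (d i / μ i) = d i
    exact mul_div_cancel₀ _ (hμ i).ne'
  have humem : u ∈ perpD (Matrix.diagonal μ) (margSpace J K) := by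
    have hr : ∀ j, u ⬝ᵥ (Matrix.diagonal μ).mulVec (eRow j) = 0 := by
      intro j; rw [← dotD_left, hDu]; exact hdr j
    have hcc : ∀ k', u ⬝ᵥ (Matrix.diagonal μ).mulVec (eCol k') = 0 := by
      intro k'; rw [← dotD_left, hDu]; exact hdc k'
    exact marg_dot_zero hr hcc
  set t0 := w - PR.mulVec w with ht0def
  have ht0 : t0 ∈ margSpace J K := by
    refine Submodule.sub_mem _ ?_ (Submodule.mem_sup_left (hPR w).1)
    have hwc : w = ∑ k'' : Fin K, c k'' • (eCol k''.succ : Cell J K → ℝ) := by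
      funext i
      simp only [hw, Matrix.mulVec, dotProduct, Emat, Finset.sum_apply, Pi.smul_apply,
        smul_eq_mul]
      exact Finset.sum_congr rfl fun k'' _ => mul_comm _ _
    rw [hwc]
    exact Submodule.sum_mem _ fun k'' _ => Submodule.smul_mem _ _ (eCol_mem_marg _)
  set zc : Cell J K → ℝ := fun i => Z i l with hzc
  set vc : Cell J K → ℝ := fun i => V i l with hvcdef
  have hvc : vc = PTperp.mulVec zc := by
    funext i
    simp [hvcdef, hV, Matrix.mul_apply, Matrix.mulVec, dotProduct, hzc]
  have hb : bVec k = (Matrix.diagonal μ).mulVec t0 + (Matrix.diagonal μ).mulVec u := by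
    rw [hDu, ht0def, ← hSmul, hd]
    abel
  have step1 : vc ⬝ᵥ bVec k = vc ⬝ᵥ (Matrix.diagonal μ).mulVec u := by
    rw [hb, dotProduct_add]
    have hz : vc ⬝ᵥ (Matrix.diagonal μ).mulVec t0 = 0 := by
      have hmem := (hPTperp zc).1
      rw [← hvc] at hmem
      exact hmem t0 ht0
    rw [hz, zero_add]
  have step2 : vc ⬝ᵥ (Matrix.diagonal μ).mulVec u = zc ⬝ᵥ (Matrix.diagonal μ).mulVec u := by
    have h := (hPTperp zc).2 u humem
    rw [sub_dotProduct, ← hvc] at h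
    linarith
  have step3 : zc ⬝ᵥ (Matrix.diagonal μ).mulVec u = -(zc ⬝ᵥ S.mulVec w) := by
    have hzb : zc ⬝ᵥ bVec k = 0 := by
      have h1 : Z ((0 : Fin (J+1)), k.succ) l = 0 := congrFun (hZcol k.succ) l
      have h2 : Z (0 : Cell J K) l = 0 := congrFun (hZcol 0) l
      simp [bVec, dotProduct_sub, dot_eV, hzc, h1, h2]
      exact h2
    rw [hDu, hd, dotProduct_sub, hzb, zero_sub]
  have LHSe : (Vᵀ * Bmat J K) l k = vc ⬝ᵥ bVec k := by
    rw [Matrix.mul_apply]; rfl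
  have e4 : ∀ i, (S * Emat J K * M⁻¹) i k = S.mulVec w i := by
    intro i
    rw [hw, Matrix.mulVec_mulVec, Matrix.mul_apply]
    rfl
  have e5 : (Zᵀ * S * Emat J K * M⁻¹) l k = zc ⬝ᵥ S.mulVec w := by
    rw [Matrix.mul_assoc Zᵀ S (Emat J K), Matrix.mul_assoc Zᵀ (S * Emat J K) M⁻¹,
      Matrix.mul_apply]
    exact Finset.sum_congr rfl fun i _ => by rw [Matrix.transpose_apply, e4 i]
  calc (Vᵀ * Bmat J K) l k = vc ⬝ᵥ bVec k := LHSe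
    _ = -(zc ⬝ᵥ S.mulVec w) := by rw [step1, step2, step3]
    _ = (-(Zᵀ * S * Emat J K * M⁻¹)) l k := by rw [Matrix.neg_apply, e5]
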